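/- The Banach space (⊕_{n∈ℕ} ℓ_1^n)_{ℓ∞} contains a complemented copy of ℓ_1, i.e., there exist bounded linear operators U : (⊕_{n∈ℕ} ℓ_1^n)_{ℓ∞} → ℓ_1 and V : ℓ_1 → (⊕_{n∈ℕ} ℓ_1^n)_{ℓ∞} with U ∘ V = id. -/

import Mathlib

set_option synthInstance.maxHeartbeats 1000000
set_option maxHeartbeats 1000000

open scoped ENNReal

noncomputable section Stmt1Aux

open Filter Topology

namespace Stmt1Aux

abbrev E := lp (fun n : ℕ => PiLp 1 (fun _ : Fin (n + 1) => ℝ)) ⊤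
abbrev L1 := lp (fun _ : ℕ => ℝ) 1

/-- an ultrafilter extending `atTop` -/
def G : Ultrafilter ℕ := (Ultrafilter.exists_le (Filter.atTop : Filter ℕ)).choose

lemma G_le : (G : Filter ℕ) ≤ Filter.atTop :=
  (Ultrafilter.exists_le (Filter.atTop : Filter ℕ)).choose_spec

/-- the `k`-th coordinate of the `n`-th block (0 if out of range) -/
def Y (y : E) (k n : ℕ) : ℝ := if h : k < n + 1 then y n ⟨k, h⟩ else 0

lemma piLp_norm (n : ℕ) (f : PiLp 1 (fun _ : Fin (n + 1) => ℝ)) :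
    ‖f‖ = ∑ j : Fin (n + 1), |f j| := by
  rw [PiLp.norm_eq_sum (by norm_num : 0 < (1 : ℝ≥0∞).toReal)]
  simp [Real.norm_eq_abs]

lemma abs_Y_le (y : E) (k n : ℕ) : |Y y k n| ≤ ‖y‖ := by
  unfold Y
  split
  · rename_i h
    have h1 : |y n ⟨k, h⟩| ≤ ‖y n‖ := by
      rw [piLp_norm]
      exact Finset.single_le_sum (f := fun j : Fin (n + 1) => |y n j|)
        (fun j _ => abs_nonneg _) (Finset.mem_univ (⟨k, h⟩ : Fin (n + 1)))
    exact h1.trans (lp.norm_apply_le_norm ENNReal.top_ne_zero y n)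
  · simp only [abs_zero]; exact norm_nonneg y

/-- limit along the ultrafilter -/
def ulim (f : ℕ → ℝ) : ℝ := limUnder (G : Filter ℕ) f

lemma exists_lim {f : ℕ → ℝ} {C : ℝ} (hf : ∀ n, |f n| ≤ C) :
    ∃ a, Tendsto f (G : Filter ℕ) (𝓝 a) := by
  have hmem : Set.Icc (-C) C ∈ Ultrafilter.map f G := by
    refine Filter.mem_map.2 (Filter.univ_mem' fun n => ?_)
    exact Set.mem_Icc.2 (abs_le.1 (hf n))
  obtain ⟨a, -, ha⟩ := (isCompact_Icc (a := -C) (b := C)).ultrafilter_le_nhds'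
    (Ultrafilter.map f G) hmem
  exact ⟨a, ha⟩

lemma ulim_eq {f : ℕ → ℝ} {a : ℝ} (h : Tendsto f (G : Filter ℕ) (𝓝 a)) :
    ulim f = a := h.limUnder_eq

lemma tendsto_ulim {f : ℕ → ℝ} {C : ℝ} (hf : ∀ n, |f n| ≤ C) :
    Tendsto f (G : Filter ℕ) (𝓝 (ulim f)) :=
  tendsto_nhds_limUnder (exists_lim hf)

/-- the candidate image sequence of `U` -/
def u (y : E) (k : ℕ) : ℝ := ulim (Y y k)

lemma tendsto_u (y : E) (k : ℕ) :
    Tendsto (Y y k) (G : Filter ℕ) (𝓝 (u y k)) :=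
  tendsto_ulim (fun n => abs_Y_le y k n)

lemma sum_abs_Y_le (y : E) (s : Finset ℕ) (n : ℕ) :
    ∑ k ∈ s, |Y y k n| ≤ ‖y‖ := by
  have h1 : ∑ k ∈ s, |Y y k n| = ∑ k ∈ s.filter (· < n + 1), |Y y k n| := by
    rw [Finset.sum_filter_of_ne]
    intro k _ hk
    by_contra hlt
    exact hk (by simp [Y, hlt])
  have h2 : ∑ k ∈ s.filter (· < n + 1), |Y y k n|
      ≤ ∑ k ∈ Finset.range (n + 1), |Y y k n| := by
    refine Finset.sum_le_sum_of_subset_of_nonneg ?_ (fun k _ _ => abs_nonneg _)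
    intro k hk
    simp only [Finset.mem_filter] at hk
    exact Finset.mem_range.2 hk.2
  have h3 : ∑ k ∈ Finset.range (n + 1), |Y y k n| = ∑ j : Fin (n + 1), |y n j| := by
    rw [← Fin.sum_univ_eq_sum_range (fun k => |Y y k n|)]
    refine Finset.sum_congr rfl fun j _ => ?_
    simp [Y, j.isLt]
  calc ∑ k ∈ s, |Y y k n| = ∑ k ∈ s.filter (· < n + 1), |Y y k n| := h1
    _ ≤ ∑ k ∈ Finset.range (n + 1), |Y y k n| := h2
    _ = ∑ j : Fin (n + 1), |y n j| := h3
    _ = ‖y n‖ := (piLp_norm n (y n)).symm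
    _ ≤ ‖y‖ := lp.norm_apply_le_norm ENNReal.top_ne_zero y n

lemma sum_abs_u_le (y : E) (s : Finset ℕ) : ∑ k ∈ s, |u y k| ≤ ‖y‖ := by
  have ht : Tendsto (fun n => ∑ k ∈ s, |Y y k n|) (G : Filter ℕ)
      (𝓝 (∑ k ∈ s, |u y k|)) :=
    tendsto_finset_sum s (fun k _ => (tendsto_u y k).abs)
  exact le_of_tendsto ht (Filter.Eventually.of_forall fun n => sum_abs_Y_le y s n)

lemma mem_u (y : E) : Memℓp (u y) 1 := by
  refine memℓp_gen' (C := ‖y‖) (fun s => ?_)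
  simpa [Real.norm_eq_abs] using sum_abs_u_le y s

lemma Y_add (y z : E) (k n : ℕ) : Y (y + z) k n = Y y k n + Y z k n := by
  unfold Y
  split
  · rw [lp.coeFn_add]; rfl
  · simp

lemma Y_smul (c : ℝ) (y : E) (k n : ℕ) : Y (c • y) k n = c * Y y k n := by
  unfold Y
  split
  · rw [lp.coeFn_smul]; rfl
  · simp

/-- the linear map `U₀` -/
def U₀ : E →ₗ[ℝ] L1 where
  toFun y := ⟨u y, mem_u y⟩
  map_add' y z := by
    apply lp.ext
    funext k
    have : Tendsto (Y (y + z) k) (G : Filter ℕ) (𝓝 (u y k + u z k)) := by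
      have := (tendsto_u y k).add (tendsto_u z k)
      refine this.congr fun n => (Y_add y z k n).symm
    show u (y + z) k = u y k + u z k
    exact ulim_eq this
  map_smul' c y := by
    apply lp.ext
    funext k
    have : Tendsto (Y (c • y) k) (G : Filter ℕ) (𝓝 (c * u y k)) := by
      have := (tendsto_u y k).const_mul c
      refine this.congr fun n => (Y_smul c y k n).symm
    show u (c • y) k = c * u y k
    exact ulim_eq this

lemma U₀_norm_le (y : E) : ‖U₀ y‖ ≤ ‖y‖ := by
  refine lp.norm_le_of_forall_sum_le (by norm_num) (norm_nonneg y) (fun s => ?_)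
  have hU : ∀ i, (U₀ y : ℕ → ℝ) i = u y i := fun i => rfl
  simpa [Real.norm_eq_abs, hU] using sum_abs_u_le y s

/-- the candidate image of `V` -/
def v (x : L1) : ∀ n : ℕ, PiLp 1 (fun _ : Fin (n + 1) => ℝ) :=
  fun n => WithLp.toLp 1 (fun k : Fin (n + 1) => x (k : ℕ))

lemma v_norm_le (x : L1) (n : ℕ) : ‖v x n‖ ≤ ‖x‖ := by
  rw [piLp_norm]
  have h1 : ∑ j : Fin (n + 1), |v x n j| = ∑ k ∈ Finset.range (n + 1), |x k| :=
    Fin.sum_univ_eq_sum_range (fun k => |x k|) (n + 1)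
  rw [show (∑ j : Fin (n + 1), |(v x n) j|) = ∑ k ∈ Finset.range (n + 1), |x k| from h1]
  have := lp.sum_rpow_le_norm_rpow (by norm_num : 0 < (1 : ℝ≥0∞).toReal) x
    (Finset.range (n + 1))
  simpa [Real.norm_eq_abs] using this

lemma mem_v (x : L1) : Memℓp (v x) ⊤ := by
  refine memℓp_infty ⟨‖x‖, ?_⟩
  rintro r ⟨n, rfl⟩
  exact v_norm_le x n

/-- the linear map `V₀` -/
def V₀ : L1 →ₗ[ℝ] E where
  toFun x := ⟨v x, mem_v x⟩
  map_add' x z := by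
    apply lp.ext
    funext n
    show v (x + z) n = v x n + v z n
    refine (WithLp.ext_iff 1).2 ?_
    funext k
    show (x + z) (k : ℕ) = x (k : ℕ) + z (k : ℕ)
    rw [lp.coeFn_add]; rfl
  map_smul' c x := by
    apply lp.ext
    funext n
    show v (c • x) n = c • v x n
    refine (WithLp.ext_iff 1).2 ?_
    funext k
    show (c • x) (k : ℕ) = c * x (k : ℕ)
    rw [lp.coeFn_smul]; rfl

lemma V₀_norm_le (x : L1) : ‖V₀ x‖ ≤ ‖x‖ :=
  lp.norm_le_of_forall_le (norm_nonneg x) (fun n => v_norm_le x n)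

end Stmt1Aux

end Stmt1Aux

/-- The Banach space `(⊕_{n∈ℕ} ℓ_1^n)_{ℓ∞}` contains a complemented copy of `ℓ_1`:
there exist bounded linear operators `U` and `V` with `U ∘ V = id`. -/
theorem stmt_1 :
    ∃ (U : (lp (fun n : ℕ => PiLp 1 (fun _ : Fin (n + 1) => ℝ)) ⊤) →L[ℝ]
            (lp (fun _ : ℕ => ℝ) 1))
      (V : (lp (fun _ : ℕ => ℝ) 1) →L[ℝ]
            (lp (fun n : ℕ => PiLp 1 (fun _ : Fin (n + 1) => ℝ)) ⊤)),
      U.comp V = ContinuousLinearMap.id ℝ (lp (fun _ : ℕ => ℝ) 1) := by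
  classical
  open Filter Topology Stmt1Aux in
  refine ⟨U₀.mkContinuous 1 (fun y => by simpa using U₀_norm_le y),
          V₀.mkContinuous 1 (fun x => by simpa using V₀_norm_le x), ?_⟩
  refine ContinuousLinearMap.ext fun x => ?_
  show U₀ (V₀ x) = x
  apply lp.ext
  funext k
  show u (V₀ x) k = x k
  have hY : ∀ n, k ≤ n → Y (V₀ x) k n = x k := by
    intro n hn
    have hk : k < n + 1 := Nat.lt_succ_of_le hn
    simp only [Y, dif_pos hk]
    rfl
  have hev : Y (V₀ x) k =ᶠ[(G : Filter ℕ)] fun _ => x k :=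
    (G_le (Filter.eventually_atTop.2 ⟨k, hY⟩))
  have : Filter.Tendsto (Y (V₀ x) k) (G : Filter ℕ) (nhds (x k)) :=
    Filter.Tendsto.congr' hev.symm tendsto_const_nhds
  exact ulim_eq this
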